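/- Let v₁, ..., v_l be nonzero vectors in ℝⁿ such that for all j, j′: the angle between v_j and v_{j′} is at most δ and |1 − ‖v_j‖/‖v_{j′}‖| ≤ δ, with δ ≤ 1/2. Then for any weights w_1,...,w_l (nonnegative, summing to 1), the convex combination v = Σ_j w_j v_j satisfies: for every j, the angle between v and v_j is at most κ(δ) and |1 − ‖v‖/‖v_j‖| ≤ κ(δ), where κ(δ) = Cδ for some universal constant C (e.g. C = 10 suffices). -/

import Mathlib

open InnerProductGeometry
open scoped RealInnerProductSpace

lemma perp_bound' {E : Type*} [NormedAddCommGroup E] [InnerProductSpace ℝ E]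
    (x y : E) {δ : ℝ} (hδ0 : 0 ≤ δ) (h : angle x y ≤ δ) :
    ‖x - (⟪x, y⟫ / ‖y‖ ^ 2) • y‖ ≤ δ * ‖x‖ := by
  by_cases hy : y = 0
  · have h2 : Real.pi / 2 ≤ δ := by rwa [hy, angle_zero_right] at h
    simp [hy]
    nlinarith [norm_nonneg x, Real.pi_gt_three]
  have hy' : (0:ℝ) < ‖y‖ := norm_pos_iff.mpr hy
  set θ := angle x y with hθdef
  have hθ0 : 0 ≤ θ := angle_nonneg x y
  have hθπ : θ ≤ Real.pi := angle_le_pi x y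
  have hcos : Real.cos θ * (‖x‖ * ‖y‖) = ⟪x, y⟫ :=
    cos_angle_mul_norm_mul_norm x y
  have hsin0 : 0 ≤ Real.sin θ := Real.sin_nonneg_of_nonneg_of_le_pi hθ0 hθπ
  have hsinδ : Real.sin θ ≤ δ := le_trans (Real.sin_le hθ0) h
  have hpyth : Real.sin θ ^ 2 + Real.cos θ ^ 2 = 1 := Real.sin_sq_add_cos_sq θ
  set c : ℝ := ⟪x, y⟫ / ‖y‖ ^ 2 with hc
  have hsq : ‖x - c • y‖ ^ 2 = ‖x‖ ^ 2 - ⟪x, y⟫ ^ 2 / ‖y‖ ^ 2 := by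
    rw [norm_sub_sq_real, real_inner_smul_right, norm_smul, Real.norm_eq_abs,
      mul_pow, sq_abs, hc]
    field_simp
    ring
  have key : ‖x - c • y‖ ^ 2 ≤ (δ * ‖x‖) ^ 2 := by
    rw [hsq, ← hcos]
    have h1 : Real.cos θ ^ 2 * ‖x‖ ^ 2 * ‖y‖ ^ 2 / ‖y‖ ^ 2
        = Real.cos θ ^ 2 * ‖x‖ ^ 2 := by field_simp
    have h2 : (Real.cos θ * (‖x‖ * ‖y‖)) ^ 2 / ‖y‖ ^ 2
        = Real.cos θ ^ 2 * ‖x‖ ^ 2 := by rw [← h1]; ring_nf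
    rw [h2]
    nlinarith [sq_nonneg ‖x‖, mul_nonneg (mul_nonneg (sub_nonneg.mpr hsinδ) (by linarith : (0:ℝ) ≤ δ + Real.sin θ)) (sq_nonneg ‖x‖)]
  nlinarith [norm_nonneg (x - c • y), norm_nonneg x, mul_nonneg hδ0 (norm_nonneg x)]

set_option maxHeartbeats 1000000 in
theorem stmt2 {n l : ℕ} (v : Fin l → EuclideanSpace ℝ (Fin n)) (δ : ℝ)
    (hδ : δ ≤ 1/2) (hδ0 : 0 ≤ δ)
    (hv : ∀ j, v j ≠ 0)
    (hang : ∀ j j', angle (v j) (v j') ≤ δ)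
    (hlen : ∀ j j', |1 - ‖v j‖ / ‖v j'‖| ≤ δ)
    (w : Fin l → ℝ) (hw : ∀ j, 0 ≤ w j) (hws : ∑ j, w j = 1) :
    ∀ j, angle (∑ j', w j' • v j') (v j) ≤ 10 * δ ∧
      |1 - ‖∑ j', w j' • v j'‖ / ‖v j‖| ≤ 10 * δ := by
  intro j
  set u : EuclideanSpace ℝ (Fin n) := ∑ j', w j' • v j' with hu
  have hvj : (0:ℝ) < ‖v j‖ := norm_pos_iff.mpr (hv j)
  -- norm comparison bounds
  have hA : ∀ j', (1 - δ) * ‖v j‖ ≤ ‖v j'‖ ∧ ‖v j'‖ ≤ (1 + δ) * ‖v j‖ := by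
    intro j'
    have h1 := abs_le.mp (hlen j' j)
    have h2 : ‖v j'‖ / ‖v j‖ * ‖v j‖ = ‖v j'‖ := div_mul_cancel₀ _ hvj.ne'
    constructor <;> nlinarith [h1.1, h1.2]
  -- upper bound on ‖u‖
  have hBu : ‖u‖ ≤ (1 + δ) * ‖v j‖ := by
    calc ‖u‖ ≤ ∑ j', ‖w j' • v j'‖ := norm_sum_le _ _
    _ ≤ ∑ j', w j' * ((1 + δ) * ‖v j‖) := by
        refine Finset.sum_le_sum fun i _ => ?_
        rw [norm_smul, Real.norm_eq_abs, abs_of_nonneg (hw i)]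
        exact mul_le_mul_of_nonneg_left (hA i).2 (hw i)
    _ = (1 + δ) * ‖v j‖ := by rw [← Finset.sum_mul, hws, one_mul]
  by_cases hcase : (1:ℝ)/3 ≤ δ
  · -- large δ : everything is trivial
    constructor
    · exact le_trans (angle_le_pi u (v j))
        (by nlinarith [Real.pi_lt_d2])
    · rw [abs_le]
      have h0 : 0 ≤ ‖u‖ / ‖v j‖ := by positivity
      have h1 : ‖u‖ / ‖v j‖ ≤ 1 + δ := by
        rw [div_le_iff₀ hvj]; linarith
      constructor <;> nlinarith
  · push_neg at hcase
    -- inner product lower bounds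
    have hC : ∀ j', (1 - 2*δ) * ‖v j‖ ^ 2 ≤ ⟪v j', v j⟫ := by
      intro j'
      have hcos := cos_angle_mul_norm_mul_norm (v j') (v j)
      have hθ0 : 0 ≤ angle (v j') (v j) := angle_nonneg _ _
      have hθδ : angle (v j') (v j) ≤ δ := hang j' j
      have hcoslb : 1 - δ^2/2 ≤ Real.cos (angle (v j') (v j)) := by
        have := Real.one_sub_sq_div_two_le_cos (x := angle (v j') (v j))
        nlinarith
      have hn := (hA j').1
      have hcos0 : (0:ℝ) ≤ Real.cos (angle (v j') (v j)) := by nlinarith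
      have k1 : (1-δ) * ‖v j‖ * ‖v j‖ ≤ ‖v j'‖ * ‖v j‖ :=
        mul_le_mul_of_nonneg_right hn hvj.le
      have k2 : (1 - δ^2/2) * ((1-δ) * ‖v j‖ * ‖v j‖)
          ≤ Real.cos (angle (v j') (v j)) * (‖v j'‖ * ‖v j‖) := by
        apply mul_le_mul hcoslb k1 (by nlinarith [sq_nonneg ‖v j‖, mul_nonneg (norm_nonneg (v j)) (norm_nonneg (v j))]) hcos0
      nlinarith [sq_nonneg ‖v j‖, mul_nonneg hδ0 (mul_nonneg (norm_nonneg (v j)) (norm_nonneg (v j))),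
        mul_nonneg (mul_nonneg (mul_nonneg hδ0 hδ0) hδ0) (mul_nonneg (norm_nonneg (v j)) (norm_nonneg (v j)))]
    have hinner : (1 - 2*δ) * ‖v j‖ ^ 2 ≤ ⟪u, v j⟫ := by
      have hsum : ⟪u, v j⟫ = ∑ j', w j' * ⟪v j', v j⟫ := by
        rw [hu, sum_inner]
        exact Finset.sum_congr rfl fun i _ => real_inner_smul_left _ _ _
      rw [hsum]
      calc (1 - 2*δ) * ‖v j‖ ^ 2 = ∑ j', w j' * ((1 - 2*δ) * ‖v j‖ ^ 2) := by
            rw [← Finset.sum_mul, hws, one_mul]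
      _ ≤ ∑ j', w j' * ⟪v j', v j⟫ :=
            Finset.sum_le_sum fun i _ => mul_le_mul_of_nonneg_left (hC i) (hw i)
    have hul : (1 - 2*δ) * ‖v j‖ ≤ ‖u‖ := by
      have := real_inner_le_norm u (v j)
      nlinarith
    have hu0 : (0:ℝ) < ‖u‖ := lt_of_lt_of_le (by nlinarith) hul
    constructor
    · -- angle bound
      set c : ℝ := ⟪u, v j⟫ / ‖v j‖ ^ 2 with hc
      set p : EuclideanSpace ℝ (Fin n) := u - c • v j with hp
      have hclb : 1 - 2*δ ≤ c := by
        rw [hc, le_div_iff₀ (by positivity)]; linarith [hinner]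
      have hpv : ⟪p, v j⟫ = 0 := by
        rw [hp, inner_sub_left, real_inner_smul_left, real_inner_self_eq_norm_sq, hc]
        field_simp
        ring
      have hpyth : ‖u‖ ^ 2 = c ^ 2 * ‖v j‖ ^ 2 + ‖p‖ ^ 2 := by
        have hdecomp : u = c • v j + p := by rw [hp]; abel
        have : ⟪c • v j, p⟫ = 0 := by
          rw [real_inner_smul_left, real_inner_comm, hpv, mul_zero]
        rw [hdecomp, norm_add_sq_real, this, norm_smul, Real.norm_eq_abs, mul_pow, sq_abs]
        ring
      -- p as convex combination of per-term perps
      have hpsum : p = ∑ j', w j' • (v j' - (⟪v j', v j⟫ / ‖v j‖ ^ 2) • v j) := by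
        have hcs : c = ∑ j', w j' * (⟪v j', v j⟫ / ‖v j‖ ^ 2) := by
          rw [hc, hu, sum_inner, Finset.sum_div]
          exact Finset.sum_congr rfl fun i _ => by
            rw [real_inner_smul_left, mul_div_assoc]
        rw [hp, hu, hcs]
        rw [Finset.sum_smul]
        rw [← Finset.sum_sub_distrib]
        refine Finset.sum_congr rfl fun i _ => ?_
        rw [smul_sub, smul_smul]
      have hpb : ‖p‖ ≤ (1 + δ) * δ * ‖v j‖ := by
        calc ‖p‖ ≤ ∑ j', ‖w j' • (v j' - (⟪v j', v j⟫ / ‖v j‖ ^ 2) • v j)‖ := by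
              rw [hpsum]; exact norm_sum_le _ _
        _ ≤ ∑ j', w j' * ((1 + δ) * δ * ‖v j‖) := by
              refine Finset.sum_le_sum fun i _ => ?_
              rw [norm_smul, Real.norm_eq_abs, abs_of_nonneg (hw i)]
              refine mul_le_mul_of_nonneg_left ?_ (hw i)
              calc ‖v i - (⟪v i, v j⟫ / ‖v j‖ ^ 2) • v j‖ ≤ δ * ‖v i‖ :=
                    perp_bound' (v i) (v j) hδ0 (hang i j)
              _ ≤ (1 + δ) * δ * ‖v j‖ := by nlinarith [(hA i).2]
        _ = (1 + δ) * δ * ‖v j‖ := by rw [← Finset.sum_mul, hws, one_mul]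
      -- cos lower bound
      have hcosu : 1 - 8 * δ^2 ≤ Real.cos (angle u (v j)) := by
        rw [cos_angle, le_div_iff₀ (by positivity)]
        have hinn : ⟪u, v j⟫ = c * ‖v j‖ ^ 2 := by
          rw [hc]; field_simp
        -- ‖p‖ ≤ 4 δ c ‖v j‖
        have hpc : ‖p‖ ≤ 4 * δ * (c * ‖v j‖) := by
          have : (1 + δ) * δ * ‖v j‖ ≤ 4 * δ * (c * ‖v j‖) := by nlinarith
          linarith [hpb]
        have h8 : (0:ℝ) < 1 - 8 * δ^2 := by nlinarith
        have hcvj : (0:ℝ) < c * ‖v j‖ := by nlinarith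
        rw [hinn]
        -- suffices squared inequality
        nlinarith [sq_nonneg ‖p‖, sq_nonneg (‖u‖ - c * ‖v j‖), hu0, norm_nonneg p,
          mul_pos h8 hu0, sq_nonneg δ, sq_nonneg (δ * (c * ‖v j‖)),
          mul_nonneg (norm_nonneg p) (mul_nonneg (mul_nonneg (by norm_num : (0:ℝ) ≤ 4) hδ0) hcvj.le)]
      -- convert to angle bound
      have hθ0 : 0 ≤ angle u (v j) := angle_nonneg _ _
      have hθπ : angle u (v j) ≤ Real.pi := angle_le_pi _ _
      have hquad := Real.cos_le_one_sub_mul_cos_sq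
        (x := angle u (v j)) (by rw [abs_of_nonneg hθ0]; exact hθπ)
      have hπ : (0:ℝ) < Real.pi := Real.pi_pos
      have hθsq : angle u (v j) ^ 2 ≤ 4 * Real.pi ^ 2 * δ ^ 2 := by
        have h2 : 2 / Real.pi ^ 2 * angle u (v j) ^ 2 ≤ 8 * δ ^ 2 := by linarith
        have h3 : (0:ℝ) < Real.pi ^ 2 := by positivity
        rw [div_mul_eq_mul_div, div_le_iff₀ h3] at h2
        nlinarith
      have hπ5 : Real.pi ≤ 5 := by linarith [Real.pi_lt_d2]
      have h2πδ : (0:ℝ) ≤ 2 * Real.pi * δ := by positivity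
      have hθle : angle u (v j) ≤ 2 * Real.pi * δ := by
        nlinarith [hθsq, hθ0, h2πδ]
      nlinarith [mul_nonneg hδ0 (by linarith : (0:ℝ) ≤ 10 - 2 * Real.pi)]
    · -- length bound
      rw [abs_le]
      have h1 : ‖u‖ / ‖v j‖ ≤ 1 + δ := by rw [div_le_iff₀ hvj]; linarith
      have h2 : 1 - 2*δ ≤ ‖u‖ / ‖v j‖ := by rw [le_div_iff₀ hvj]; linarith
      constructor <;> nlinarith
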